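/- For positive reals L₁, L₂, L₃ and integers q, n₁, n₂ with 2 ≤ n₁ ≤ q and 2 ≤ n₂ ≤ q, the determinant of the 3×3 matrix with rows (n₁, 0, −L₁q(q−n₂+1)), (n₂, L₂(q−n₂+1)(1−q), L₂(q−n₁+1)), (q+1, L₃(q−n₂+1)(n₂−2), L₃(n₁−1)(q−n₂+1)−L₃(q−n₁+1)) equals −q(q−n₂+1)²·(L₂L₃n₁(n₁−2) + L₁L₃n₂(n₂−2) + L₁L₂(q²−1)), and in particular is strictly negative. -/

import Mathlib

open Matrix

theorem det_induction_neg (L₁ L₂ L₃ : ℝ) (hL₁ : 0 < L₁) (hL₂ : 0 < L₂) (hL₃ : 0 < L₃)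
    (q n₁ n₂ : ℤ) (hn₁ : 2 ≤ n₁) (hn₁q : n₁ ≤ q) (hn₂ : 2 ≤ n₂) (hn₂q : n₂ ≤ q) :
    Matrix.det !![(n₁ : ℝ), 0, -L₁ * q * (q - n₂ + 1);
                  (n₂ : ℝ), L₂ * (q - n₂ + 1) * (1 - q), L₂ * (q - n₁ + 1);
                  ((q : ℝ) + 1), L₃ * (q - n₂ + 1) * (n₂ - 2),
                    L₃ * (n₁ - 1) * (q - n₂ + 1) - L₃ * (q - n₁ + 1)]
      = -q * (q - n₂ + 1) ^ 2 *
          (L₂ * L₃ * n₁ * (n₁ - 2) + L₁ * L₃ * n₂ * (n₂ - 2) + L₁ * L₂ * (q ^ 2 - 1)) ∧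
    Matrix.det !![(n₁ : ℝ), 0, -L₁ * q * (q - n₂ + 1);
                  (n₂ : ℝ), L₂ * (q - n₂ + 1) * (1 - q), L₂ * (q - n₁ + 1);
                  ((q : ℝ) + 1), L₃ * (q - n₂ + 1) * (n₂ - 2),
                    L₃ * (n₁ - 1) * (q - n₂ + 1) - L₃ * (q - n₁ + 1)] < 0 := by
  have hq : (2:ℝ) ≤ q := by exact_mod_cast le_trans hn₁ hn₁q
  have hn1 : (2:ℝ) ≤ n₁ := by exact_mod_cast hn₁
  have hn2 : (2:ℝ) ≤ n₂ := by exact_mod_cast hn₂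
  have hn2q : (n₂:ℝ) ≤ q := by exact_mod_cast hn₂q
  have hdet : Matrix.det !![(n₁ : ℝ), 0, -L₁ * q * (q - n₂ + 1);
                  (n₂ : ℝ), L₂ * (q - n₂ + 1) * (1 - q), L₂ * (q - n₁ + 1);
                  ((q : ℝ) + 1), L₃ * (q - n₂ + 1) * (n₂ - 2),
                    L₃ * (n₁ - 1) * (q - n₂ + 1) - L₃ * (q - n₁ + 1)]
      = -q * (q - n₂ + 1) ^ 2 *
          (L₂ * L₃ * n₁ * (n₁ - 2) + L₁ * L₃ * n₂ * (n₂ - 2) + L₁ * L₂ * (q ^ 2 - 1)) := by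
    rw [Matrix.det_fin_three]
    simp only [Matrix.of_apply, Matrix.cons_val', Matrix.cons_val_zero, Matrix.cons_val_one, Matrix.cons_val_two, Matrix.head_cons, Matrix.tail_cons, Matrix.empty_val', Matrix.cons_val_fin_one, Matrix.head_fin_const]
    norm_num [Matrix.cons_val_zero, Matrix.cons_val_one, Matrix.head_cons]
    ring
  refine ⟨hdet, hdet ▸ ?_⟩
  have h1 : (0:ℝ) < q := by linarith
  have h2 : (0:ℝ) < (q - n₂ + 1) ^ 2 := by nlinarith
  have h3 : (0:ℝ) < L₂ * L₃ * n₁ * (n₁ - 2) + L₁ * L₃ * n₂ * (n₂ - 2) + L₁ * L₂ * (q ^ 2 - 1) := by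
    have : (0:ℝ) ≤ L₂ * L₃ * n₁ * (n₁ - 2) := by
      apply mul_nonneg; apply mul_nonneg; positivity; linarith; linarith
    have : (0:ℝ) ≤ L₁ * L₃ * n₂ * (n₂ - 2) := by
      apply mul_nonneg; apply mul_nonneg; positivity; linarith; linarith
    have hq2 : (0:ℝ) < q ^ 2 - 1 := by nlinarith
    have : (0:ℝ) < L₁ * L₂ * (q ^ 2 - 1) := by positivity
    linarith
  nlinarith [mul_pos (mul_pos h1 h2) h3]
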